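/- Let F be a field of characteristic zero, K = F(√d) a quadratic extension, and n ≥ 1. Suppose d₁,...,dₙ ∈ F* satisfy: d₁⋯dₙ ∈ N(K*), and for each i there exist x,y ∈ K with N(x) + N(y)·(d₁⋯d_{i-1}) = dᵢ (with empty product 1). Assume moreover that no proper nonempty subproduct structure interferes, i.e. for every i < n, the auxiliary elements can be chosen with y-part giving nonzero off-diagonal entries (equivalently no proper nonempty subset {d₁,...,dᵢ} has product in N(K*)). Then there exists X ∈ GL(n,K) with X*X = diag(d₁,...,dₙ). -/

import Mathlib

open Matrix

private lemma map_mul_transpose {F K : Type*} [Field F] [Field K] [Algebra F K]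
    (σ : K ≃ₐ[F] K) {n : ℕ} (A B : Matrix (Fin n) (Fin n) K) :
    ((A * B).map σ)ᵀ = (B.map σ)ᵀ * (A.map σ)ᵀ := by
  ext i j
  simp only [Matrix.transpose_apply, Matrix.map_apply, Matrix.mul_apply, map_sum,
    _root_.map_mul]
  exact Finset.sum_congr rfl fun m _ => mul_comm _ _

private lemma block_step {F K : Type*} [Field F] [Field K] [Algebra F K]
    (σ : K ≃ₐ[F] K) (hσ2 : ∀ x, σ (σ x) = x) {n : ℕ}
    (ka kb : Fin n) (hab : ka ≠ kb) (gm : Fin n → K) (x y P c : K)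
    (hP : σ P = P) (ha : gm ka = P) (hb : gm kb = 1)
    (hc : σ x * x + σ y * y * P = c) :
    ∃ T : Matrix (Fin n) (Fin n) K,
      (T.map σ)ᵀ * (Matrix.diagonal gm * T) =
        Matrix.diagonal (fun i => if i = ka then c else if i = kb then P * c else gm i) := by
  classical
  set T : Matrix (Fin n) (Fin n) K := Matrix.of fun m j =>
    if m = ka then (if j = ka then y else if j = kb then -(σ x) else 0)
    else if m = kb then (if j = ka then x else if j = kb then σ y * P else 0)
    else if m = j then 1 else 0 with hTdef
  refine ⟨T, ?_⟩
  ext i j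
  rw [Matrix.mul_apply]
  have hsum : ∀ m : Fin n, ((T.map ⇑σ)ᵀ) i m * (Matrix.diagonal gm * T) m j
      = σ (T m i) * (gm m * T m j) := by
    intro m
    rw [Matrix.transpose_apply, Matrix.map_apply, Matrix.diagonal_mul]
  simp only [hsum]
  rw [show (Finset.univ : Finset (Fin n)) = {ka, kb} ∪ (Finset.univ \ {ka, kb}) by
        rw [Finset.union_sdiff_of_subset (Finset.subset_univ _)],
      Finset.sum_union Finset.disjoint_sdiff, Finset.sum_pair hab]
  have hrest : ∑ m ∈ Finset.univ \ {ka, kb}, σ (T m i) * (gm m * T m j)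
      = if i ∈ Finset.univ \ ({ka, kb} : Finset (Fin n)) then
          (if i = j then gm i else 0) else 0 := by
    rw [← Finset.sum_ite_eq' (Finset.univ \ {ka, kb}) i
        (fun m => if m = j then gm m else 0)]
    refine Finset.sum_congr rfl fun m hm => ?_
    simp only [Finset.mem_sdiff, Finset.mem_insert, Finset.mem_singleton, not_or] at hm
    obtain ⟨-, hma, hmb⟩ := hm
    simp only [hTdef, Matrix.of_apply, hma, hmb, if_false]
    by_cases hmi : m = i <;> by_cases hmj : m = j <;>
      simp [hmi, hmj]
  rw [hrest]
  simp only [hTdef, Matrix.of_apply, Finset.mem_sdiff, Finset.mem_univ, Finset.mem_insert,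
    Finset.mem_singleton, true_and, not_or, Matrix.diagonal_apply]
  by_cases hia : i = ka <;> by_cases hib : i = kb <;>
    by_cases hja : j = ka <;> by_cases hjb : j = kb
  all_goals simp_all [hab, Ne.symm hab]
  -- remaining algebraic goals handled below
  all_goals try ring
  all_goals first
    | linear_combination hc
    | linear_combination P * hc
    | (split_ifs with hcond
       · exact absurd hcond.symm (by assumption)
       · rfl)
    | (intro hcond; exact absurd hcond.symm (by assumption))

theorem stmt11 (F K : Type*) [Field F] [Field K] [CharZero F] [Algebra F K]
    (σ : K ≃ₐ[F] K) (hσinv : ∀ x, σ (σ x) = x)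
    (hfix : ∀ x : K, σ x = x ↔ ∃ y : F, algebraMap F K y = x)
    (d : F) (hd0 : d ≠ 0) (hd : ¬ IsSquare d)
    (s : K) (hs : s * s = algebraMap F K d) (hσs : σ s = -s)
    (hgen : ∀ x : K, ∃ a b : F, x = algebraMap F K a + algebraMap F K b * s)
    (n : ℕ) (hn : 1 ≤ n) (dseq : Fin n → F) (hdnz : ∀ i, dseq i ≠ 0)
    (hclosed : ∃ z : K, z ≠ 0 ∧ σ z * z = algebraMap F K (∏ i, dseq i))
    (hnested : ∀ i : Fin n, ∃ x y : K,
      σ x * x + (σ y * y) *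
          algebraMap F K (∏ j ∈ Finset.univ.filter fun j : Fin n => j < i, dseq j) =
        algebraMap F K (dseq i))
    (hnoproper : ∀ i : Fin n, (i : ℕ) + 1 < n →
      ¬ ∃ z : K, z ≠ 0 ∧
        σ z * z = algebraMap F K
          (∏ j ∈ Finset.univ.filter fun j : Fin n => j ≤ i, dseq j)) :
    ∃ X : Matrix (Fin n) (Fin n) K, IsUnit X.det ∧
      (X.map σ)ᵀ * X = Matrix.diagonal fun i => algebraMap F K (dseq i) := by
  classical
  have hφinj : Function.Injective (algebraMap F K) := (algebraMap F K).injective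
  set Pp : ℕ → F := fun k => ∏ j ∈ Finset.univ.filter (fun j : Fin n => (j : ℕ) < k), dseq j
    with hPp
  have hPne : ∀ k, Pp k ≠ 0 := fun k => Finset.prod_ne_zero_iff.mpr fun j _ => hdnz j
  have hφne : ∀ a : F, a ≠ 0 → algebraMap F K a ≠ 0 := fun a ha h =>
    ha (hφinj (h.trans (map_zero (algebraMap F K)).symm))
  have key : ∀ k, k < n → ∃ X : Matrix (Fin n) (Fin n) K,
      (X.map σ)ᵀ * X = Matrix.diagonal (fun i : Fin n =>
        if (i : ℕ) < k then algebraMap F K (dseq i)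
        else if (i : ℕ) = k then algebraMap F K (Pp k) else 1) := by
    intro k
    induction k with
    | zero =>
      intro _
      refine ⟨1, ?_⟩
      have h1 : (1 : Matrix (Fin n) (Fin n) K).map ⇑σ = 1 :=
        Matrix.map_one _ (map_zero σ) (map_one σ)
      rw [h1, Matrix.transpose_one, one_mul]
      have hP0 : Pp 0 = 1 := by simp [hPp]
      have hfun : (fun i : Fin n =>
          if (i : ℕ) < 0 then algebraMap F K (dseq i)
          else if (i : ℕ) = 0 then algebraMap F K (Pp 0) else 1) = fun _ : Fin n => (1 : K) := by
        funext i
        simp [hP0]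
      rw [hfun, Matrix.diagonal_one]
    | succ k ih =>
      intro hk1
      obtain ⟨X, hX⟩ := ih (by omega)
      have hkn : k < n := by omega
      have hka : ((⟨k, hkn⟩ : Fin n) : ℕ) = k := rfl
      have hkb : ((⟨k + 1, hk1⟩ : Fin n) : ℕ) = k + 1 := rfl
      have hab : (⟨k, hkn⟩ : Fin n) ≠ ⟨k + 1, hk1⟩ :=
        Fin.ne_of_val_ne (by omega : (k : ℕ) ≠ k + 1)
      obtain ⟨x, y, hxy⟩ := hnested ⟨k, hkn⟩
      have hprodeq : (Finset.univ.filter fun j : Fin n => j < (⟨k, hkn⟩ : Fin n))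
          = Finset.univ.filter fun j : Fin n => (j : ℕ) < k := by
        ext j
        simp [Fin.lt_def]
      rw [hprodeq] at hxy
      have hgma : (if ((⟨k, hkn⟩ : Fin n) : ℕ) < k then algebraMap F K (dseq ⟨k, hkn⟩)
          else if ((⟨k, hkn⟩ : Fin n) : ℕ) = k then algebraMap F K (Pp k) else 1)
          = algebraMap F K (Pp k) := by
        rw [hka]
        simp
      have hgmb : (if ((⟨k + 1, hk1⟩ : Fin n) : ℕ) < k then algebraMap F K (dseq ⟨k + 1, hk1⟩)
          else if ((⟨k + 1, hk1⟩ : Fin n) : ℕ) = k then algebraMap F K (Pp k) else 1)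
          = (1 : K) := by
        rw [hkb, if_neg (by omega), if_neg (by omega)]
      obtain ⟨T, hT⟩ := block_step σ hσinv (⟨k, hkn⟩ : Fin n) (⟨k + 1, hk1⟩ : Fin n) hab
        (fun i : Fin n => if (i : ℕ) < k then algebraMap F K (dseq i)
          else if (i : ℕ) = k then algebraMap F K (Pp k) else 1)
        x y (algebraMap F K (Pp k)) (algebraMap F K (dseq ⟨k, hkn⟩)) (σ.commutes _)
        hgma hgmb hxy
      refine ⟨X * T, ?_⟩
      rw [map_mul_transpose, Matrix.mul_assoc, ← Matrix.mul_assoc ((X.map ⇑σ)ᵀ) X T, hX, hT]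
      have hsucc : Pp (k + 1) = Pp k * dseq ⟨k, hkn⟩ := by
        have hins : (Finset.univ.filter fun j : Fin n => (j : ℕ) < k + 1)
            = insert (⟨k, hkn⟩ : Fin n) (Finset.univ.filter fun j : Fin n => (j : ℕ) < k) := by
          ext j
          simp only [Finset.mem_filter, Finset.mem_univ, true_and, Finset.mem_insert,
            Fin.ext_iff, hka]
          omega
        have hnotmem : (⟨k, hkn⟩ : Fin n) ∉ Finset.univ.filter fun j : Fin n => (j : ℕ) < k := by
          simp only [Finset.mem_filter, Finset.mem_univ, true_and, hka]
          omega
        rw [hPp]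
        simp only []
        rw [hins, Finset.prod_insert hnotmem]
        ring
      refine congrArg Matrix.diagonal (funext fun i => ?_)
      rcases eq_or_ne i ⟨k, hkn⟩ with hia | hia
      · rw [hia, if_pos rfl]
        rw [show ((⟨k, hkn⟩ : Fin n) : ℕ) = k from rfl]
        rw [if_pos (by omega : k < k + 1)]
      · rcases eq_or_ne i ⟨k + 1, hk1⟩ with hib | hib
        · rw [hib, if_neg (Ne.symm hab), if_pos rfl]
          rw [show ((⟨k + 1, hk1⟩ : Fin n) : ℕ) = k + 1 from rfl]
          rw [if_neg (by omega : ¬ (k + 1 < k + 1)), if_pos rfl, hsucc, _root_.map_mul]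
        · have h1 : (i : ℕ) ≠ k := fun h => hia (Fin.ext (h.trans hka.symm))
          have h2 : (i : ℕ) ≠ k + 1 := fun h => hib (Fin.ext (h.trans hkb.symm))
          rw [if_neg hia, if_neg hib]
          split_ifs <;> first | rfl | (exfalso; omega)
  obtain ⟨X, hX⟩ := key (n - 1) (by omega)
  have hlt : n - 1 < n := by omega
  have hlv : ((⟨n - 1, hlt⟩ : Fin n) : ℕ) = n - 1 := rfl
  obtain ⟨z, hz0, hzz⟩ := hclosed
  have hfull : (∏ i, dseq i) = Pp (n - 1) * dseq ⟨n - 1, hlt⟩ := by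
    have hins : (Finset.univ : Finset (Fin n))
        = insert (⟨n - 1, hlt⟩ : Fin n)
            (Finset.univ.filter fun j : Fin n => (j : ℕ) < n - 1) := by
      ext j
      simp only [Finset.mem_univ, Finset.mem_insert, Finset.mem_filter, true_and, true_iff,
        Fin.ext_iff, hlv]
      have := j.isLt
      omega
    have hnotmem : (⟨n - 1, hlt⟩ : Fin n) ∉
        Finset.univ.filter fun j : Fin n => (j : ℕ) < n - 1 := by
      simp only [Finset.mem_filter, Finset.mem_univ, true_and, hlv]
      omega
    rw [hins, Finset.prod_insert hnotmem]
    ring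
  have hPK : algebraMap F K (Pp (n - 1)) ≠ 0 := hφne _ (hPne _)
  set t : K := z * (algebraMap F K (Pp (n - 1)))⁻¹ with ht
  set S : Matrix (Fin n) (Fin n) K :=
    Matrix.diagonal (fun i => if i = ⟨n - 1, hlt⟩ then t else 1) with hS
  have hSσ : (S.map ⇑σ)ᵀ = Matrix.diagonal (fun i => σ (if i = ⟨n - 1, hlt⟩ then t else 1)) := by
    rw [hS, Matrix.diagonal_map (map_zero σ), Matrix.diagonal_transpose]
  have heq : (((X * S).map ⇑σ)ᵀ) * (X * S)
      = Matrix.diagonal fun i => algebraMap F K (dseq i) := by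
    rw [map_mul_transpose, Matrix.mul_assoc, ← Matrix.mul_assoc ((X.map ⇑σ)ᵀ) X S, hX, hSσ,
      hS, Matrix.diagonal_mul_diagonal, Matrix.diagonal_mul_diagonal]
    refine congrArg Matrix.diagonal (funext fun i => ?_)
    rcases eq_or_ne i ⟨n - 1, hlt⟩ with hi | hi
    · rw [hi, if_pos rfl, hlv]
      rw [if_neg (by omega : ¬ (n - 1 < n - 1)), if_pos rfl]
      rw [ht, _root_.map_mul, map_inv₀, σ.commutes]
      have hstep : σ z * (algebraMap F K (Pp (n - 1)))⁻¹ *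
          (algebraMap F K (Pp (n - 1)) * (z * (algebraMap F K (Pp (n - 1)))⁻¹))
          = σ z * z * (algebraMap F K (Pp (n - 1)))⁻¹ := by
        field_simp
      rw [hstep, hzz, hfull, _root_.map_mul]
      field_simp
    · have h2 : (i : ℕ) ≠ n - 1 := fun h => hi (Fin.ext (h.trans hlv.symm))
      have h3 : (i : ℕ) < n - 1 := by
        have := i.isLt
        omega
      rw [if_neg hi, _root_.map_one σ, one_mul, mul_one, if_pos h3]
  refine ⟨X * S, ?_, heq⟩
  have hdet := congrArg Matrix.det heq
  rw [Matrix.det_mul, Matrix.det_diagonal] at hdet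
  have hne : (∏ i, algebraMap F K (dseq i)) ≠ 0 :=
    Finset.prod_ne_zero_iff.mpr fun i _ => hφne _ (hdnz i)
  rw [isUnit_iff_ne_zero]
  exact right_ne_zero_of_mul (hdet ▸ hne)
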